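/- Let R satisfy (H1), fix n ≥ 1, u_1,…,u_n ∈ ℝᵈ, a ∈ ℝ₊ᵈ. Define the auxiliary LCP sequence: (Δξ_1^{(a)}, ζ_1^{(a)}) solving LCP(−R⁻¹a − R⁻¹u_1, R⁻¹) with ζ the regulated part and Δξ the pushing part, and (Δξ_k^{(a)}, ζ_k^{(a)}) solving LCP(−R⁻¹Δξ_{k−1}^{(a)} − R⁻¹u_k, R⁻¹) for 2 ≤ k ≤ n. Then Δξ_k^{(a)} = z_k^{(a)} and ζ_k^{(a)} = Δy_k^{(a)} for all 1 ≤ k ≤ n, where (y^{(a)}, z^{(a)}) solves SP({a+Σu_k}, R). -/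

import Mathlib

open Matrix Finset MeasureTheory ProbabilityTheory

noncomputable section

/-- A pair `(ξ, ζ)` solves the linear complementarity problem `LCP(η, M)`. -/
def IsLCPSol {d : ℕ} (M : Matrix (Fin d) (Fin d) ℝ) (η ξ ζ : Fin d → ℝ) : Prop :=
  ζ = η + M *ᵥ ξ ∧ (∀ i, 0 ≤ ξ i) ∧ (∀ i, 0 ≤ ζ i) ∧ ξ ⬝ᵥ ζ = 0

/-- `(y, z)` solves the Skorokhod problem `SP({a + Σ u_n}, M)` in the orthant. -/
def IsSPSol {d : ℕ} (M : Matrix (Fin d) (Fin d) ℝ) (a : Fin d → ℝ)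
    (u y z : ℕ → Fin d → ℝ) : Prop :=
  y 0 = 0 ∧ z 0 = a ∧
  ∀ n, 1 ≤ n →
    z n = z (n - 1) + u n + M *ᵥ (y n - y (n - 1)) ∧
    (∀ i, 0 ≤ z n i) ∧ (∀ i, 0 ≤ y n i - y (n - 1) i) ∧
    z n ⬝ᵥ (y n - y (n - 1)) = 0

attribute [local instance] Matrix.linftyOpNormedAddCommGroup Matrix.linftyOpNormedRing
  Matrix.linftyOpNormedAlgebra Matrix.linftyOpNormedSpace Matrix.linftyOpIsBoundedSMul

noncomputable section

namespace StmtAux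

variable {d : ℕ}

/-- entrywise nonnegative -/
def Nng (M : Matrix (Fin d) (Fin d) ℝ) : Prop := ∀ i j, 0 ≤ M i j

lemma Nng.mul {M N : Matrix (Fin d) (Fin d) ℝ} (hM : Nng M) (hN : Nng N) : Nng (M * N) :=
  fun i j => by
    rw [Matrix.mul_apply]
    exact Finset.sum_nonneg fun k _ => mul_nonneg (hM i k) (hN k j)

lemma Nng.one : Nng (1 : Matrix (Fin d) (Fin d) ℝ) := fun i j => by
  by_cases h : i = j <;> simp [Matrix.one_apply, h]

lemma Nng.pow {M : Matrix (Fin d) (Fin d) ℝ} (hM : Nng M) (n : ℕ) : Nng (M ^ n) := by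
  induction n with
  | zero => rw [pow_zero]; exact Nng.one
  | succ n ih => rw [pow_succ]; exact ih.mul hM

lemma Nng.smul {c : ℝ} (hc : 0 ≤ c) {M : Matrix (Fin d) (Fin d) ℝ} (hM : Nng M) :
    Nng (c • M) := fun i j => by
  rw [Matrix.smul_apply, smul_eq_mul]; exact mul_nonneg hc (hM i j)

lemma nng_geom {s : Matrix (Fin d) (Fin d) ℝ} (hs : Nng s) (h : ‖s‖ < 1) :
    Nng (Ring.inverse (1 - s)) := by
  rw [← geom_series_eq_inverse s h]
  intro i j
  have hsum : Summable fun n : ℕ => s ^ n := summable_geometric_of_norm_lt_one h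
  erw [tsum_apply hsum, tsum_apply (Pi.summable.mp hsum i)]
  exact tsum_nonneg fun n => (hs.pow n) i j

lemma step {B : Matrix (Fin d) (Fin d) ℝ} (hB : Nng B) {μ ν : ℝ} (hνμ : ν ≤ μ)
    (hμU : IsUnit (μ • (1 : Matrix (Fin d) (Fin d) ℝ) - B))
    (hA : Nng (Ring.inverse (μ • (1 : Matrix (Fin d) (Fin d) ℝ) - B)))
    (hlt : (μ - ν) * ‖Ring.inverse (μ • (1 : Matrix (Fin d) (Fin d) ℝ) - B)‖ < 1) :
    Nng (Ring.inverse (ν • (1 : Matrix (Fin d) (Fin d) ℝ) - B)) := by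
  set X := μ • (1 : Matrix (Fin d) (Fin d) ℝ) - B with hX
  set A := Ring.inverse X with hAdef
  have hXA : X * A = 1 := Ring.mul_inverse_cancel X hμU
  have hAX : A * X = 1 := Ring.inverse_mul_cancel X hμU
  have hnorm : ‖(μ - ν) • A‖ < 1 := by
    rw [norm_smul, Real.norm_eq_abs, abs_of_nonneg (sub_nonneg.mpr hνμ)]; exact hlt
  have hfac : ν • (1 : Matrix (Fin d) (Fin d) ℝ) - B = X * (1 - (μ - ν) • A) := by
    rw [mul_sub, mul_one, mul_smul_comm, hXA, hX]
    module
  have hcomXA : Commute X A := hXA.trans hAX.symm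
  have hcom : Commute X (1 - (μ - ν) • A) :=
    (Commute.one_right X).sub_right (hcomXA.smul_right _)
  have hkey : Ring.inverse (ν • (1 : Matrix (Fin d) (Fin d) ℝ) - B)
      = Ring.inverse (1 - (μ - ν) • A) * A := by
    rw [hfac, Ring.mul_inverse_rev' hcom, hAdef]
  rw [hkey]
  exact (nng_geom (hA.smul (sub_nonneg.mpr hνμ)) hnorm).mul hA

lemma inv_one_sub_nng {B : Matrix (Fin d) (Fin d) ℝ} (hB : Nng B)
    (hU : ∀ μ : ℝ, 1 ≤ μ → IsUnit (μ • (1 : Matrix (Fin d) (Fin d) ℝ) - B)) :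
    Nng (Ring.inverse ((1 : Matrix (Fin d) (Fin d) ℝ) - B)) := by
  set l : ℝ := ‖B‖ + 1 with hl
  have hl1 : (1:ℝ) ≤ l := le_add_of_nonneg_left (norm_nonneg B)
  have hlpos : (0:ℝ) < l := lt_of_lt_of_le one_pos hl1
  have hBlt : ‖l⁻¹ • B‖ < 1 := by
    rw [norm_smul, Real.norm_eq_abs, abs_of_pos (inv_pos.mpr hlpos)]
    rw [inv_mul_lt_iff₀ hlpos, mul_one]
    linarith [norm_nonneg B]
  have base : Nng (Ring.inverse (l • (1 : Matrix (Fin d) (Fin d) ℝ) - B)) := by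
    have hfac : l • (1 : Matrix (Fin d) (Fin d) ℝ) - B
        = (l • (1 : Matrix (Fin d) (Fin d) ℝ)) * (1 - l⁻¹ • B) := by
      rw [mul_sub, mul_one, smul_mul_assoc, one_mul, smul_smul,
        mul_inv_cancel₀ (ne_of_gt hlpos), one_smul]
    have hcom : Commute (l • (1 : Matrix (Fin d) (Fin d) ℝ)) (1 - l⁻¹ • B) := by
      show _ * _ = _ * _
      rw [smul_mul_assoc, one_mul, mul_smul_comm, mul_one]
    have hu1 : (l • (1 : Matrix (Fin d) (Fin d) ℝ)) * (l⁻¹ • (1 : Matrix (Fin d) (Fin d) ℝ)) = 1 := by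
      rw [smul_mul_assoc, one_mul, smul_smul, mul_inv_cancel₀ (ne_of_gt hlpos), one_smul]
    have hu2 : (l⁻¹ • (1 : Matrix (Fin d) (Fin d) ℝ)) * (l • (1 : Matrix (Fin d) (Fin d) ℝ)) = 1 := by
      rw [smul_mul_assoc, one_mul, smul_smul, inv_mul_cancel₀ (ne_of_gt hlpos), one_smul]
    have hscal : Ring.inverse (l • (1 : Matrix (Fin d) (Fin d) ℝ))
        = l⁻¹ • (1 : Matrix (Fin d) (Fin d) ℝ) :=
      Ring.inverse_unit ⟨_, _, hu1, hu2⟩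
    rw [hfac, Ring.mul_inverse_rev' hcom, hscal]
    exact (nng_geom (hB.smul (inv_nonneg.mpr hlpos.le)) hBlt).mul
      (Nng.one.smul (c := l⁻¹) (inv_nonneg.mpr hlpos.le))
  have hcont : ContinuousOn (fun μ : ℝ => Ring.inverse (μ • (1 : Matrix (Fin d) (Fin d) ℝ) - B))
      (Set.Icc 1 l) := by
    intro μ hμ
    have h1 : ContinuousAt (fun μ : ℝ => μ • (1 : Matrix (Fin d) (Fin d) ℝ) - B) μ := by fun_prop
    have h2 : ContinuousAt Ring.inverse (μ • (1 : Matrix (Fin d) (Fin d) ℝ) - B) := by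
      have := NormedRing.inverse_continuousAt (hU μ hμ.1).unit
      rwa [IsUnit.unit_spec] at this
    exact (ContinuousAt.comp (g := Ring.inverse)
      (f := fun μ : ℝ => μ • (1 : Matrix (Fin d) (Fin d) ℝ) - B) h2 h1).continuousWithinAt
  obtain ⟨C, hC⟩ := isCompact_Icc.exists_bound_of_continuousOn hcont
  have hC0 : 0 ≤ C := le_trans (norm_nonneg _) (hC 1 ⟨le_refl 1, hl1⟩)
  set δ : ℝ := (C + 1)⁻¹ with hδdef
  have hδpos : 0 < δ := inv_pos.mpr (by linarith)
  have key : ∀ m : ℕ, ∀ μ, μ ∈ Set.Icc (1:ℝ) l → l - m * δ ≤ μ →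
      Nng (Ring.inverse (μ • (1 : Matrix (Fin d) (Fin d) ℝ) - B)) := by
    intro m
    induction m with
    | zero =>
      intro μ hμ h
      have : μ = l := le_antisymm hμ.2 (by simpa using h)
      rw [this]; exact base
    | succ m ih =>
      intro μ hμ h
      have h5 : δ * C + δ = 1 := by
        have : δ * (C + 1) = 1 := inv_mul_cancel₀ (by linarith)
        linarith [this, mul_add δ C 1, mul_one δ]
      rcases le_total (μ + δ) l with hc | hc
      · have hmem : μ + δ ∈ Set.Icc (1:ℝ) l := ⟨by linarith [hμ.1], hc⟩
        have hA' := ih (μ + δ) hmem (by push_cast at h; linarith)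
        apply step hB (by linarith : μ ≤ μ + δ) (hU _ hmem.1) hA'
        have h2 := hC (μ + δ) hmem
        have h3 : (μ + δ - μ) * ‖Ring.inverse ((μ + δ) • (1 : Matrix (Fin d) (Fin d) ℝ) - B)‖
            ≤ δ * C := by
          have : μ + δ - μ = δ := by ring
          rw [this]
          exact mul_le_mul_of_nonneg_left h2 hδpos.le
        linarith
      · have hmem : l ∈ Set.Icc (1:ℝ) l := ⟨hl1, le_refl l⟩
        have hA' := ih l hmem (by
          have : (0:ℝ) ≤ m * δ := mul_nonneg (Nat.cast_nonneg m) hδpos.le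
          linarith)
        apply step hB hμ.2 (hU l hl1) hA'
        have h2 := hC l hmem
        have h3 : (l - μ) * ‖Ring.inverse (l • (1 : Matrix (Fin d) (Fin d) ℝ) - B)‖ ≤ δ * C :=
          mul_le_mul (by linarith) h2 (norm_nonneg _) hδpos.le
        linarith
  obtain ⟨m, hm⟩ := exists_nat_ge ((l - 1) / δ)
  have h1 : l - m * δ ≤ 1 := by
    have := (div_le_iff₀ hδpos).mp hm; linarith
  have := key m 1 ⟨le_refl 1, hl1⟩ h1
  rwa [one_smul] at this

lemma subinv {B : Matrix (Fin d) (Fin d) ℝ} (hB : Nng B)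
    (hU : ∀ μ : ℝ, 1 ≤ μ → IsUnit (μ • (1 : Matrix (Fin d) (Fin d) ℝ) - B))
    (v : Fin d → ℝ) (hv : ∀ i, 0 ≤ v i) (hle : ∀ i, v i ≤ (B *ᵥ v) i) : v = 0 := by
  have hN : Nng (Ring.inverse ((1 : Matrix (Fin d) (Fin d) ℝ) - B)) := inv_one_sub_nng hB hU
  have hu : IsUnit ((1 : Matrix (Fin d) (Fin d) ℝ) - B) := by
    have := hU 1 le_rfl; rwa [one_smul] at this
  set N := Ring.inverse ((1 : Matrix (Fin d) (Fin d) ℝ) - B) with hNdef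
  have hN1 : N * ((1 : Matrix (Fin d) (Fin d) ℝ) - B) = 1 := Ring.inverse_mul_cancel _ hu
  have hv' : N *ᵥ (((1 : Matrix (Fin d) (Fin d) ℝ) - B) *ᵥ v) = v := by
    rw [Matrix.mulVec_mulVec, hN1, Matrix.one_mulVec]
  have hw : ∀ j, (((1 : Matrix (Fin d) (Fin d) ℝ) - B) *ᵥ v) j ≤ 0 := by
    intro j
    rw [Matrix.sub_mulVec, Pi.sub_apply, Matrix.one_mulVec]
    linarith [hle j]
  funext i
  have h0 : (N *ᵥ (((1 : Matrix (Fin d) (Fin d) ℝ) - B) *ᵥ v)) i ≤ 0 := by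
    rw [Matrix.mulVec, dotProduct]
    apply Finset.sum_nonpos
    intro j _
    calc N i j * (((1 : Matrix (Fin d) (Fin d) ℝ) - B) *ᵥ v) j
        ≤ N i j * 0 := mul_le_mul_of_nonneg_left (hw j) (hN i j)
      _ = 0 := mul_zero _
  rw [hv'] at h0
  exact le_antisymm h0 (hv i)

lemma lcp_unique {B : Matrix (Fin d) (Fin d) ℝ} (hB : Nng B)
    (hU : ∀ μ : ℝ, 1 ≤ μ → IsUnit (μ • (1 : Matrix (Fin d) (Fin d) ℝ) - B))
    (q x w x' w' : Fin d → ℝ)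
    (h1 : w = q + ((1 : Matrix (Fin d) (Fin d) ℝ) - B) *ᵥ x)
    (hx : ∀ i, 0 ≤ x i) (hw : ∀ i, 0 ≤ w i) (hc : x ⬝ᵥ w = 0)
    (h1' : w' = q + ((1 : Matrix (Fin d) (Fin d) ℝ) - B) *ᵥ x')
    (hx' : ∀ i, 0 ≤ x' i) (hw' : ∀ i, 0 ≤ w' i) (hc' : x' ⬝ᵥ w' = 0) :
    x = x' ∧ w = w' := by
  have fixpt : ∀ (x w : Fin d → ℝ), w = q + ((1 : Matrix (Fin d) (Fin d) ℝ) - B) *ᵥ x →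
      (∀ i, 0 ≤ x i) → (∀ i, 0 ≤ w i) → x ⬝ᵥ w = 0 →
      ∀ i, x i = max ((B *ᵥ x) i - q i) 0 := by
    intro x w h1 hx hw hc i
    have hw_i : w i = q i + (x i - (B *ᵥ x) i) := by
      rw [h1, Pi.add_apply, Matrix.sub_mulVec, Pi.sub_apply, Matrix.one_mulVec]
    have hxw : x i * w i = 0 := by
      have hsum : ∑ j, x j * w j = 0 := hc
      exact (Finset.sum_eq_zero_iff_of_nonneg
        (fun j _ => mul_nonneg (hx j) (hw j))).mp hsum i (Finset.mem_univ i)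
    rcases (hx i).lt_or_eq with hpos | hzero
    · have hw0 : w i = 0 := by
        rcases mul_eq_zero.mp hxw with h | h
        · exact absurd h (ne_of_gt hpos)
        · exact h
      have heq : (B *ᵥ x) i - q i = x i := by
        rw [hw0] at hw_i; linarith
      rw [heq]
      exact (max_eq_left hpos.le).symm
    · have heq : (B *ᵥ x) i - q i = -(w i) := by
        rw [← hzero] at hw_i; linarith
      rw [heq, ← hzero]
      exact (max_eq_right (by linarith [hw i])).symm
  have f1 := fixpt x w h1 hx hw hc
  have f2 := fixpt x' w' h1' hx' hw' hc'
  set v : Fin d → ℝ := fun i => |x i - x' i| with hvdef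
  have hvle : ∀ i, v i ≤ (B *ᵥ v) i := by
    intro i
    have h3 : |x i - x' i| ≤ |((B *ᵥ x) i - q i) - ((B *ᵥ x') i - q i)| := by
      rw [f1 i, f2 i]
      exact abs_max_sub_max_le_abs _ _ _
    have h4 : ((B *ᵥ x) i - q i) - ((B *ᵥ x') i - q i) = ∑ j, B i j * (x j - x' j) := by
      rw [Matrix.mulVec, Matrix.mulVec, dotProduct, dotProduct]
      rw [Finset.sum_congr rfl (fun j _ => mul_sub (B i j) (x j) (x' j)),
        Finset.sum_sub_distrib]
      ring
    calc v i ≤ |∑ j, B i j * (x j - x' j)| := by rw [← h4]; exact h3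
      _ ≤ ∑ j, |B i j * (x j - x' j)| := Finset.abs_sum_le_sum_abs _ _
      _ = ∑ j, B i j * |x j - x' j| := by
          refine Finset.sum_congr rfl fun j _ => ?_
          rw [abs_mul, abs_of_nonneg (hB i j)]
      _ = (B *ᵥ v) i := by rw [Matrix.mulVec, dotProduct]
  have hv0 : v = 0 := subinv hB hU v (fun i => abs_nonneg _) hvle
  have hxx : x = x' := by
    funext i
    have := congrFun hv0 i
    simp only [hvdef, Pi.zero_apply] at this
    have := abs_eq_zero.mp this
    linarith
  exact ⟨hxx, by rw [h1, h1', hxx]⟩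

lemma units_of_spec {P : Matrix (Fin d) (Fin d) ℝ} (hspec : spectralRadius ℝ P < 1) :
    ∀ μ : ℝ, 1 ≤ μ → IsUnit (μ • (1 : Matrix (Fin d) (Fin d) ℝ) - Pᵀ) := by
  intro μ hμ
  have hnot : μ ∉ spectrum ℝ P := by
    intro hmem
    have hle : (‖μ‖₊ : ENNReal) ≤ spectralRadius ℝ P :=
      le_iSup₂ (f := fun k (_ : k ∈ spectrum ℝ P) => (‖k‖₊ : ENNReal)) μ hmem
    have hnrm : (1:ℝ) ≤ ‖μ‖ := by
      rw [Real.norm_eq_abs]; exact le_trans hμ (le_abs_self μ)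
    have h1 : (1 : NNReal) ≤ ‖μ‖₊ := by exact_mod_cast hnrm
    have h2 : (1 : ENNReal) ≤ (‖μ‖₊ : ENNReal) := by exact_mod_cast h1
    exact absurd (lt_of_le_of_lt (le_trans h2 hle) hspec) (lt_irrefl _)
  have hIsU : IsUnit (algebraMap ℝ (Matrix (Fin d) (Fin d) ℝ) μ - P) :=
    spectrum.notMem_iff.mp hnot
  rw [Algebra.algebraMap_eq_smul_one] at hIsU
  rw [Matrix.isUnit_iff_isUnit_det] at hIsU ⊢
  have htr : (μ • (1 : Matrix (Fin d) (Fin d) ℝ) - Pᵀ)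
      = (μ • (1 : Matrix (Fin d) (Fin d) ℝ) - P)ᵀ := by
    rw [Matrix.transpose_sub, Matrix.transpose_smul, Matrix.transpose_one]
  rw [htr, Matrix.det_transpose]
  exact hIsU

end StmtAux


theorem stmt_10 {d : ℕ} (P : Matrix (Fin d) (Fin d) ℝ)
    (hdiag : ∀ i, P i i = 0) (hnonneg : ∀ i j, 0 ≤ P i j)
    (hspec : spectralRadius ℝ P < 1)
    (n : ℕ) (hn : 1 ≤ n)
    (a : Fin d → ℝ) (ha : ∀ i, 0 ≤ a i) (u y z : ℕ → Fin d → ℝ)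
    (hSP : IsSPSol (1 - Pᵀ) a u y z)
    (ξ ζ : ℕ → Fin d → ℝ)
    (haux1 : IsLCPSol (1 - Pᵀ)⁻¹
      (-((1 - Pᵀ)⁻¹ *ᵥ a) - (1 - Pᵀ)⁻¹ *ᵥ u 1) (ξ 1) (ζ 1))
    (hauxk : ∀ k, 2 ≤ k → k ≤ n →
      IsLCPSol (1 - Pᵀ)⁻¹
        (-((1 - Pᵀ)⁻¹ *ᵥ ξ (k - 1)) - (1 - Pᵀ)⁻¹ *ᵥ u k) (ξ k) (ζ k)) :
    ∀ k, 1 ≤ k → k ≤ n → ξ k = z k ∧ ζ k = y k - y (k - 1) := by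
  classical
  have hU := StmtAux.units_of_spec hspec
  have hB : StmtAux.Nng Pᵀ := fun i j => hnonneg j i
  have hRU : IsUnit ((1 : Matrix (Fin d) (Fin d) ℝ) - Pᵀ) := by
    have := hU 1 le_rfl; rwa [one_smul] at this
  have hRdet : IsUnit ((1 : Matrix (Fin d) (Fin d) ℝ) - Pᵀ).det :=
    (Matrix.isUnit_iff_isUnit_det _).mp hRU
  have hRinv : ((1 : Matrix (Fin d) (Fin d) ℝ) - Pᵀ) * ((1 : Matrix (Fin d) (Fin d) ℝ) - Pᵀ)⁻¹ = 1 :=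
    Matrix.mul_nonsing_inv _ hRdet
  obtain ⟨hy0, hz0, hstep⟩ := hSP
  have transform : ∀ (p uk xk wk : Fin d → ℝ),
      wk = (-(((1 : Matrix (Fin d) (Fin d) ℝ) - Pᵀ)⁻¹ *ᵥ p)
        - ((1 : Matrix (Fin d) (Fin d) ℝ) - Pᵀ)⁻¹ *ᵥ uk)
        + ((1 : Matrix (Fin d) (Fin d) ℝ) - Pᵀ)⁻¹ *ᵥ xk →
      xk = p + uk + ((1 : Matrix (Fin d) (Fin d) ℝ) - Pᵀ) *ᵥ wk := by
    intro p uk xk wk hwk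
    have h := congrArg (fun v => ((1 : Matrix (Fin d) (Fin d) ℝ) - Pᵀ) *ᵥ v) hwk
    simp only [Matrix.mulVec_add, Matrix.mulVec_sub, Matrix.mulVec_neg,
      Matrix.mulVec_mulVec, hRinv, Matrix.one_mulVec] at h
    funext i
    have h2 := congrFun h i
    simp only [Pi.add_apply, Pi.sub_apply, Pi.neg_apply] at h2 ⊢
    linarith
  intro k
  induction k using Nat.strong_induction_on with
  | _ k IH =>
    intro hk1 hkn
    rcases eq_or_lt_of_le hk1 with h1 | h2
    · -- k = 1
      subst h1
      obtain ⟨hζeq, hξnn, hζnn, hdot⟩ := haux1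
      have hform : ξ 1 = a + u 1 + ((1 : Matrix (Fin d) (Fin d) ℝ) - Pᵀ) *ᵥ ζ 1 :=
        transform a (u 1) (ξ 1) (ζ 1) hζeq
      rw [← hz0] at hform
      obtain ⟨hz1, hznn, hynn, hzy⟩ := hstep 1 le_rfl
      have huniq := StmtAux.lcp_unique hB hU (z 0 + u 1) (ζ 1) (ξ 1)
        (y 1 - y 0) (z 1) hform hζnn hξnn (by rw [dotProduct_comm]; exact hdot)
        hz1 hynn hznn (by rw [dotProduct_comm]; exact hzy)
      exact ⟨huniq.2, huniq.1⟩
    · -- 2 ≤ k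
      have hk2 : 2 ≤ k := h2
      have hkm1 : 1 ≤ k - 1 := by omega
      have hkm1n : k - 1 ≤ n := by omega
      have hlt : k - 1 < k := by omega
      obtain ⟨hξz, _⟩ := IH (k - 1) hlt hkm1 hkm1n
      obtain ⟨hζeq, hξnn, hζnn, hdot⟩ := hauxk k hk2 hkn
      have hform : ξ k = ξ (k - 1) + u k + ((1 : Matrix (Fin d) (Fin d) ℝ) - Pᵀ) *ᵥ ζ k :=
        transform (ξ (k - 1)) (u k) (ξ k) (ζ k) hζeq
      rw [hξz] at hform
      obtain ⟨hzk, hznn, hynn, hzy⟩ := hstep k (by omega)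
      have huniq := StmtAux.lcp_unique hB hU (z (k - 1) + u k) (ζ k) (ξ k)
        (y k - y (k - 1)) (z k) hform hζnn hξnn (by rw [dotProduct_comm]; exact hdot)
        hzk hynn hznn (by rw [dotProduct_comm]; exact hzy)
      exact ⟨huniq.2, huniq.1⟩
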